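/- Suppose (f_i)_{i≥1} is a sequence of causal functions with values in [0,1] that is dense in the set of all [0,1]-valued causal functions for the topology of uniform convergence on compact sets. If the cone field is K-causal, then f := Σ_{i≥1} 2^{-i} f_i is a time function. -/

import Mathlib

open Manifold Set MeasureTheory Filter

variable {E : Type*} [NormedAddCommGroup E] [NormedSpace ℝ E]
  {H : Type*} [TopologicalSpace H] {I : ModelWithCorners ℝ E H}
  {M : Type*} [TopologicalSpace M] [ChartedSpace H M] [IsManifold I (⊤ : ℕ∞) M]

/-- A closed cone field: each fiber is a convex cone, closed after adding `0`, either
singular (the whole tangent space) or regular (contained in an open half space),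
and the union with the zero section is closed in the tangent bundle. -/
def IsClosedConeField (I : ModelWithCorners ℝ E H) (M : Type*) [TopologicalSpace M]
    [ChartedSpace H M] [IsManifold I (⊤ : ℕ∞) M] (C : ∀ x : M, Set (TangentSpace I x)) : Prop :=
  (∀ x, Convex ℝ (C x)) ∧
  (∀ x, ∀ v ∈ C x, ∀ t : ℝ, 0 < t → t • v ∈ C x) ∧
  (∀ x, IsClosed (insert (0 : TangentSpace I x) (C x))) ∧
  IsClosed {p : TangentBundle I M | p.snd = 0 ∨ p.snd ∈ C p.proj} ∧
  (∀ x : M, C x = Set.univ ∨ ∃ p : TangentSpace I x →L[ℝ] ℝ, ∀ v ∈ C x, 0 < p v)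

/-- A causal curve for the cone field `C` on `[a,b]`: continuous, almost everywhere
differentiable with derivative in the cone (or zero). -/
def IsCausalCurve (C : ∀ x : M, Set (TangentSpace I x)) (γ : ℝ → M) (a b : ℝ) : Prop :=
  ContinuousOn γ (Set.Icc a b) ∧
  ∀ᵐ t ∂(volume.restrict (Set.Icc a b)),
    MDifferentiableAt 𝓘(ℝ, ℝ) I γ t ∧
      mfderiv 𝓘(ℝ, ℝ) I γ t (1 : ℝ) ∈ insert (0 : TangentSpace I (γ t)) (C (γ t))

/-- The causal future of a point. -/
def causalFuture (C : ∀ x : M, Set (TangentSpace I x)) (x : M) : Set M :=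
  insert x {y | ∃ a b : ℝ, a < b ∧ ∃ γ : ℝ → M, IsCausalCurve C γ a b ∧
    γ a = x ∧ γ b = y ∧ ∃ s ∈ Set.Icc a b, ∃ t ∈ Set.Icc a b, γ s ≠ γ t}

/-- A causal function. -/
def IsCausalFun (C : ∀ x : M, Set (TangentSpace I x)) (f : M → ℝ) : Prop :=
  Continuous f ∧ ∀ x, ∀ y ∈ causalFuture C x, f x ≤ f y

/-- A Lyapunov function for `C`. -/
def IsLyapunov (C : ∀ x : M, Set (TangentSpace I x)) (τ : M → ℝ) : Prop :=
  ContMDiff I 𝓘(ℝ, ℝ) (⊤ : ℕ∞) τ ∧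
  ∀ x : M, mfderiv I 𝓘(ℝ, ℝ) τ x ≠ 0 → ∀ v ∈ C x, 0 < show ℝ from mfderiv I 𝓘(ℝ, ℝ) τ x v

/-- A neutral point of a function `f` with respect to `C`. -/
def IsNeutralPt (C : ∀ x : M, Set (TangentSpace I x)) (f : M → ℝ) (x : M) : Prop :=
  C x = Set.univ ∨ ∃ y ∈ causalFuture C x, y ≠ x ∧ f y = f x

/-- A strict value of `f`. -/
def IsStrictValue (C : ∀ x : M, Set (TangentSpace I x)) (f : M → ℝ) (a : ℝ) : Prop :=
  ¬ ∃ x : M, IsNeutralPt C f x ∧ f x = a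

/-- A special causal function. -/
def IsSpecialCausal (C : ∀ x : M, Set (TangentSpace I x)) (f : M → ℝ) : Prop :=
  IsCausalFun C f ∧ Dense {a : ℝ | IsStrictValue C f a}


/-- If `(fᵢ)` is a dense sequence of `[0,1]`-valued causal functions and the cone field is
`K`-causal, then `Σ 2⁻ⁱ fᵢ` is a time function. -/
theorem dense_sum_is_time (C : ∀ x : M, Set (TangentSpace I x))
    (hC : IsClosedConeField I M C) (f : ℕ → M → ℝ)
    (hcaus : ∀ i, IsCausalFun C (f i))
    (hval : ∀ i, ∀ x : M, f i x ∈ Set.Icc (0 : ℝ) 1)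
    (hdense : ∀ g : M → ℝ, IsCausalFun C g → (∀ x : M, g x ∈ Set.Icc (0 : ℝ) 1) →
      ∀ K : Set M, IsCompact K → ∀ ε : ℝ, 0 < ε → ∃ i, ∀ x ∈ K, |f i x - g x| < ε)
    (hKcausal : ∀ x y : M, (∀ g : M → ℝ, IsCausalFun C g → g x ≤ g y) →
      (∀ g : M → ℝ, IsCausalFun C g → g y ≤ g x) → x = y) :
    IsCausalFun C (fun x => ∑' i : ℕ, (2 : ℝ)⁻¹ ^ (i + 1) * f i x) ∧
      ∀ x : M, ∀ y ∈ causalFuture C x, y ≠ x →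
        (∑' i : ℕ, (2 : ℝ)⁻¹ ^ (i + 1) * f i x) < ∑' i : ℕ, (2 : ℝ)⁻¹ ^ (i + 1) * f i y := by

  classical
  have hgeo : Summable (fun i : ℕ => (2 : ℝ)⁻¹ ^ (i + 1)) := by
    simpa [pow_succ] using
      (summable_geometric_of_lt_one (by norm_num) (by norm_num : (2 : ℝ)⁻¹ < 1)).mul_right (2 : ℝ)⁻¹
  have hterm_nonneg : ∀ (x : M) (i : ℕ), 0 ≤ (2 : ℝ)⁻¹ ^ (i + 1) * f i x := fun x i =>
    mul_nonneg (pow_nonneg (by norm_num) _) (hval i x).1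
  have hterm_le : ∀ (x : M) (i : ℕ), (2 : ℝ)⁻¹ ^ (i + 1) * f i x ≤ (2 : ℝ)⁻¹ ^ (i + 1) := by
    intro x i
    calc (2 : ℝ)⁻¹ ^ (i + 1) * f i x ≤ (2 : ℝ)⁻¹ ^ (i + 1) * 1 :=
          mul_le_mul_of_nonneg_left (hval i x).2 (pow_nonneg (by norm_num) _)
      _ = (2 : ℝ)⁻¹ ^ (i + 1) := mul_one _
  have hsum : ∀ x : M, Summable (fun i : ℕ => (2 : ℝ)⁻¹ ^ (i + 1) * f i x) := fun x =>
    Summable.of_nonneg_of_le (hterm_nonneg x) (hterm_le x) hgeo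
  have hmono : ∀ x : M, ∀ y ∈ causalFuture C x,
      (∑' i : ℕ, (2 : ℝ)⁻¹ ^ (i + 1) * f i x) ≤ ∑' i : ℕ, (2 : ℝ)⁻¹ ^ (i + 1) * f i y := by
    intro x y hy
    refine Summable.tsum_le_tsum (fun i => ?_) (hsum x) (hsum y)
    exact mul_le_mul_of_nonneg_left ((hcaus i).2 x y hy) (pow_nonneg (by norm_num) _)
  have hcont : Continuous (fun x : M => ∑' i : ℕ, (2 : ℝ)⁻¹ ^ (i + 1) * f i x) := by
    refine continuous_tsum (fun i => continuous_const.mul (hcaus i).1) hgeo (fun i x => ?_)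
    rw [Real.norm_eq_abs, abs_of_nonneg (hterm_nonneg x i)]
    exact hterm_le x i
  refine ⟨⟨hcont, hmono⟩, ?_⟩
  intro x y hy hyx
  -- every causal function is nondecreasing from x to y
  have h1 : ∀ g : M → ℝ, IsCausalFun C g → g x ≤ g y := fun g hg => hg.2 x y hy
  -- by K-causality there is a causal g with g x < g y
  have h2 : ∃ g : M → ℝ, IsCausalFun C g ∧ g x < g y := by
    by_contra hcon
    push_neg at hcon
    exact hyx (hKcausal x y h1 (fun g hg => hcon g hg)).symm
  obtain ⟨g, hg, hgxy⟩ := h2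
  -- truncate g to a [0,1]-valued causal function g'
  set g' : M → ℝ := fun z => max 0 (min (g z - g x) 1) with hg'def
  have hg'causal : IsCausalFun C g' := by
    constructor
    · exact continuous_const.max ((hg.1.sub continuous_const).min continuous_const)
    · intro a b hb
      have := hg.2 a b hb
      simp only [hg'def]
      exact max_le_max le_rfl (min_le_min (by linarith) le_rfl)
  have hg'val : ∀ z : M, g' z ∈ Set.Icc (0 : ℝ) 1 :=
    fun z => ⟨le_max_left _ _, max_le (by norm_num) (min_le_right _ _)⟩
  have hg'x : g' x = 0 := by simp [hg'def]
  have hg'y : 0 < g' y := by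
    have : 0 < min (g y - g x) 1 := lt_min (by linarith) one_pos
    simp only [hg'def]
    exact lt_max_of_lt_right this
  -- apply density with K = {x, y} and ε = g' y / 3
  obtain ⟨i, hi⟩ := hdense g' hg'causal hg'val {x, y}
    ((Set.toFinite ({x, y} : Set M)).isCompact) (g' y / 3)
    (by linarith)
  have hix : |f i x - g' x| < g' y / 3 := hi x (by simp)
  have hiy : |f i y - g' y| < g' y / 3 := hi y (by simp)
  have hfi : f i x < f i y := by
    rw [hg'x] at hix
    have h1' := abs_lt.mp hix
    have h2' := abs_lt.mp hiy
    have : f i x - 0 < g' y / 3 := h1'.2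
    linarith [h2'.1]
  refine Summable.tsum_lt_tsum (i := i) (fun j =>
      mul_le_mul_of_nonneg_left ((hcaus j).2 x y hy) (pow_nonneg (by norm_num) _)) ?_
      (hsum x) (hsum y)
  exact mul_lt_mul_of_pos_left hfi (pow_pos (by norm_num) _)
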